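/- Let x be a C¹ solution of the first-order singular Cucker–Smale system whose initial positions and natural velocities are strictly increasing: x_1(0) < x_2(0) < … < x_N(0) and ν_1 < ν_2 < … < ν_N. Then for all t ≥ 0, min_{i ≠ j} |x_i(t) − x_j(t)| ≥ C'_{m1}, where C'_{m1} = min_{1 ≤ i ≤ N−1} min{ x_{i+1}(0) − x_i(0), ((1−β)(ν_{i+1} − ν_i)/κ)^{1/(1−β)} } > 0. -/

import Mathlib

open Real Filter Set Topology

/-- The interaction function `Ψ(x) = sign(x)·|x|^{1−β}/(1−β)`. -/
noncomputable def psiCS (β y : ℝ) : ℝ := Real.sign y * |y| ^ (1 - β) / (1 - β)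

/-- A C¹ solution on `[0,∞)` of the first-order singular Cucker–Smale system:
`x_i'(t) = ν_i + (κ/N) Σ_k Ψ(x_k(t) − x_i(t))`. -/
def IsCSSol (N : ℕ) (β κ : ℝ) (ν : Fin N → ℝ) (x : ℝ → Fin N → ℝ) : Prop :=
  (∀ i, ContDiffOn ℝ 1 (fun t => x t i) (Set.Ici 0)) ∧
  ∀ i, ∀ t ≥ (0:ℝ), HasDerivWithinAt (fun s => x s i)
    (ν i + (κ / (N:ℝ)) * ∑ k, psiCS β (x t k - x t i)) (Set.Ici 0) t

/-- The constant `C'_{m1} = min_{1 ≤ i ≤ N−1} min{x_{i+1}(0)−x_i(0), Ψ⁻¹((ν_{i+1}−ν_i)/κ)}`,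
taken over all adjacent pairs of indices. -/
noncomputable def Cm1 (N : ℕ) (β κ : ℝ) (ν : Fin N → ℝ) (x0 : Fin N → ℝ) : ℝ :=
  ⨅ p : {q : Fin N × Fin N // (q.1 : ℕ) + 1 = (q.2 : ℕ)},
    min (x0 p.1.2 - x0 p.1.1)
      (((1 - β) * (ν p.1.2 - ν p.1.1) / κ) ^ (1 / (1 - β)))

/- ------------ auxiliary lemmas ------------- -/

lemma psiCS_neg (β y : ℝ) : psiCS β (-y) = - psiCS β y := by
  simp [psiCS, Real.sign_neg, abs_neg, neg_mul, neg_div]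

lemma psiCS_of_nonneg {β : ℝ} (hβ1 : β < 1) {y : ℝ} (hy : 0 ≤ y) :
    psiCS β y = y ^ (1 - β) / (1 - β) := by
  rcases eq_or_lt_of_le hy with h | h
  · rw [psiCS, ← h, Real.sign_zero, Real.zero_rpow (by linarith : (1:ℝ) - β ≠ 0)]
    simp
  · rw [psiCS, Real.sign_of_pos h, abs_of_pos h, one_mul]

lemma psiCS_nonneg {β : ℝ} (hβ1 : β < 1) {y : ℝ} (hy : 0 ≤ y) : 0 ≤ psiCS β y := by
  rw [psiCS_of_nonneg hβ1 hy]
  have : (0:ℝ) < 1 - β := by linarith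
  positivity

lemma psiCS_mono {β : ℝ} (hβ1 : β < 1) {a b : ℝ} (ha : 0 ≤ a) (hab : a ≤ b) :
    psiCS β a ≤ psiCS β b := by
  rw [psiCS_of_nonneg hβ1 ha, psiCS_of_nonneg hβ1 (ha.trans hab)]
  have h1 : (0:ℝ) < 1 - β := by linarith
  gcongr

lemma rpow_subadd {a d γ : ℝ} (ha : 0 ≤ a) (hd : 0 ≤ d) (hγ0 : 0 ≤ γ) (hγ1 : γ ≤ 1) :
    (a + d) ^ γ ≤ a ^ γ + d ^ γ := by
  have key := NNReal.rpow_add_le_add_rpow a.toNNReal d.toNNReal hγ0 hγ1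
  have := NNReal.coe_le_coe.mpr key
  simpa [NNReal.coe_rpow, Real.coe_toNNReal _ ha, Real.coe_toNNReal _ hd,
    Real.coe_toNNReal _ (add_nonneg ha hd)] using this

lemma psiCS_subadd {β : ℝ} (hβ0 : 0 < β) (hβ1 : β < 1) {a d : ℝ} (ha : 0 ≤ a) (hd : 0 ≤ d) :
    psiCS β (a + d) ≤ psiCS β a + psiCS β d := by
  have h1 : (0:ℝ) < 1 - β := by linarith
  rw [psiCS_of_nonneg hβ1 (add_nonneg ha hd), psiCS_of_nonneg hβ1 ha, psiCS_of_nonneg hβ1 hd,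
    ← add_div]
  gcongr
  exact rpow_subadd ha hd h1.le (by linarith)

lemma psiCS_inv {β : ℝ} (hβ1 : β < 1) {z : ℝ} (hz : 0 ≤ z) :
    psiCS β (((1 - β) * z) ^ (1 / (1 - β))) = z := by
  have h1 : (0:ℝ) < 1 - β := by linarith
  have hbase : 0 ≤ (1 - β) * z := mul_nonneg h1.le hz
  have hy : 0 ≤ ((1 - β) * z) ^ (1 / (1 - β)) := Real.rpow_nonneg hbase _
  rw [psiCS_of_nonneg hβ1 hy, one_div, Real.rpow_inv_rpow hbase h1.ne']
  field_simp

/-- Core barrier lemma. -/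
lemma barrierCS {f f' : ℝ → ℝ} {a b m : ℝ}
    (hc : ContinuousOn f (Icc a b))
    (hd : ∀ t ∈ Ioo a b, HasDerivAt f (f' t) t)
    (hge : ∀ t ∈ Ioo a b, f t ≤ m → 0 ≤ f' t)
    (ha : m ≤ f a) : ∀ t ∈ Icc a b, m ≤ f t := by
  intro t2 ht2
  by_contra hlt
  push_neg at hlt
  set S := Icc a t2 ∩ f ⁻¹' (Ici m) with hS
  have hSne : a ∈ S := ⟨⟨le_rfl, ht2.1⟩, ha⟩
  have hScl : IsClosed S :=
    (hc.mono (Icc_subset_Icc le_rfl ht2.2)).preimage_isClosed_of_isClosed isClosed_Icc isClosed_Ici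
  have hbdd : BddAbove S := ⟨t2, fun t ht => ht.1.2⟩
  set v := sSup S with hv
  have hvS : v ∈ S := hScl.csSup_mem ⟨a, hSne⟩ hbdd
  have hav : a ≤ v := hvS.1.1
  have hvle : v ≤ t2 := hvS.1.2
  have hvlt : v < t2 := by
    rcases eq_or_lt_of_le hvle with h | h
    · exact absurd (h ▸ hvS.2) (not_le.mpr hlt)
    · exact h
  have hlt' : ∀ t ∈ Ioc v t2, f t < m := by
    intro t ht
    by_contra h
    push_neg at h
    exact absurd (le_csSup hbdd ⟨⟨hav.trans ht.1.le, ht.2⟩, h⟩) (not_le.mpr ht.1)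
  have hmono : MonotoneOn f (Icc v t2) := by
    apply monotoneOn_of_deriv_nonneg (convex_Icc v t2)
      (hc.mono (Icc_subset_Icc hav ht2.2))
    · intro t ht
      rw [interior_Icc] at ht
      have htab : t ∈ Ioo a b := ⟨hav.trans_lt ht.1, ht.2.trans_le ht2.2⟩
      exact (hd t htab).differentiableAt.differentiableWithinAt
    · intro t ht
      rw [interior_Icc] at ht
      have htab : t ∈ Ioo a b := ⟨hav.trans_lt ht.1, ht.2.trans_le ht2.2⟩
      rw [(hd t htab).deriv]
      exact hge t htab (hlt' t ⟨ht.1, ht.2.le⟩).le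
  have := hmono ⟨le_rfl, hvle⟩ ⟨hvle, le_rfl⟩ hvle
  have := hvS.2
  simp only [mem_preimage, mem_Ici] at this
  linarith

lemma adjMonoCS {N : ℕ} (f : Fin N → ℝ)
    (h : ∀ i j : Fin N, (i:ℕ) + 1 = (j:ℕ) → f i ≤ f j) : Monotone f := by
  have key : ∀ n : ℕ, ∀ k l : Fin N, (l:ℕ) = (k:ℕ) + n → f k ≤ f l := by
    intro n
    induction n with
    | zero =>
      intro k l hl
      have : k = l := Fin.ext (by omega)
      exact this ▸ le_rfl
    | succ n ih =>
      intro k l hl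
      have hkn : (k:ℕ) + n < N := by omega
      exact (ih k ⟨(k:ℕ) + n, hkn⟩ rfl).trans (h ⟨(k:ℕ) + n, hkn⟩ l (by simp; omega))
  intro k l hkl
  exact key ((l:ℕ) - (k:ℕ)) k l (by have := (Fin.le_def).mp hkl; omega)

lemma adjGeCS {N : ℕ} (f : Fin N → ℝ) (C : ℝ) (hC : 0 ≤ C)
    (h : ∀ i j : Fin N, (i:ℕ) + 1 = (j:ℕ) → C ≤ f j - f i) :
    ∀ k l : Fin N, (k:ℕ) < (l:ℕ) → C ≤ f l - f k := by
  have key : ∀ n : ℕ, ∀ k l : Fin N, (l:ℕ) = (k:ℕ) + n + 1 → C ≤ f l - f k := by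
    intro n
    induction n with
    | zero =>
      intro k l hl
      exact h k l (by omega)
    | succ n ih =>
      intro k l hl
      have hkn : (k:ℕ) + n + 1 < N := by omega
      have h1 := ih k ⟨(k:ℕ) + n + 1, hkn⟩ rfl
      have h2 := h ⟨(k:ℕ) + n + 1, hkn⟩ l (by simp; omega)
      linarith
  intro k l hkl
  exact key ((l:ℕ) - (k:ℕ) - 1) k l (by omega)

/-- Uniform-in-time lower bound on pairwise distances under strictly increasing
initial positions and natural velocities. -/
theorem stmt5 (N : ℕ) (hN : 2 ≤ N) (β κ : ℝ) (hβ0 : 0 < β) (hβ1 : β < 1)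
    (hκ : 0 < κ) (ν : Fin N → ℝ) (x : ℝ → Fin N → ℝ) (hx : IsCSSol N β κ ν x)
    (hx0 : StrictMono (x 0)) (hν : StrictMono ν) :
    0 < Cm1 N β κ ν (x 0) ∧
    ∀ t ≥ (0:ℝ), ∀ i j : Fin N, i ≠ j → Cm1 N β κ ν (x 0) ≤ |x t i - x t j| := by
  obtain ⟨hC1, hder⟩ := hx
  have hγ : (0:ℝ) < 1 - β := by linarith
  haveI hne : Nonempty {q : Fin N × Fin N // (q.1 : ℕ) + 1 = (q.2 : ℕ)} :=
    ⟨⟨(⟨0, by omega⟩, ⟨1, by omega⟩), rfl⟩⟩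
  set mm : Fin N → Fin N → ℝ := fun i j =>
    min (x 0 j - x 0 i) (((1 - β) * (ν j - ν i) / κ) ^ (1 / (1 - β))) with hmm
  have hCeq : Cm1 N β κ ν (x 0)
      = ⨅ p : {q : Fin N × Fin N // (q.1 : ℕ) + 1 = (q.2 : ℕ)}, mm p.1.1 p.1.2 := rfl
  have hfinlt : ∀ i j : Fin N, (i:ℕ) + 1 = (j:ℕ) → i < j := by
    intro i j h; rw [Fin.lt_def]; omega
  have hmmpos : ∀ i j : Fin N, (i:ℕ) + 1 = (j:ℕ) → 0 < mm i j := by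
    intro i j h
    have hij := hfinlt i j h
    refine lt_min (sub_pos.2 (hx0 hij)) ?_
    have hb : 0 < (1 - β) * (ν j - ν i) / κ :=
      div_pos (mul_pos hγ (sub_pos.2 (hν hij))) hκ
    exact Real.rpow_pos_of_pos hb _
  have hCpos : 0 < Cm1 N β κ ν (x 0) := by
    obtain ⟨p, hp⟩ := exists_eq_ciInf_of_finite
      (f := fun p : {q : Fin N × Fin N // (q.1 : ℕ) + 1 = (q.2 : ℕ)} => mm p.1.1 p.1.2)
    rw [hCeq, ← hp]
    exact hmmpos _ _ p.2
  have hCle : ∀ i j : Fin N, (i:ℕ) + 1 = (j:ℕ) → Cm1 N β κ ν (x 0) ≤ mm i j := by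
    intro i j h
    rw [hCeq]
    exact ciInf_le (f := fun p : {q : Fin N × Fin N // (q.1 : ℕ) + 1 = (q.2 : ℕ)} =>
      mm p.1.1 p.1.2) (Set.Finite.bddBelow (Set.finite_range _)) ⟨(i, j), h⟩
  have hcont : ∀ i, ContinuousOn (fun t => x t i) (Ici 0) := fun i => (hC1 i).continuousOn
  have hNpos : (0:ℝ) < (N:ℝ) := Nat.cast_pos.mpr (by omega)
  -- the key uniform bound for adjacent pairs
  have key : ∀ t1 ≥ (0:ℝ), ∀ i j : Fin N, (i:ℕ) + 1 = (j:ℕ) → mm i j ≤ x t1 j - x t1 i := by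
    intro t1 ht1
    set A := {t ∈ Icc (0:ℝ) t1 |
      ∀ i j : Fin N, (i:ℕ) + 1 = (j:ℕ) → mm i j ≤ x t j - x t i} with hA
    have hAeq : A = ⋂ p : {q : Fin N × Fin N // (q.1 : ℕ) + 1 = (q.2 : ℕ)},
        (Icc (0:ℝ) t1 ∩ (fun t => x t p.1.2 - x t p.1.1) ⁻¹' Ici (mm p.1.1 p.1.2)) := by
      ext s
      simp only [hA, mem_setOf_eq, mem_iInter, mem_inter_iff, mem_preimage, mem_Ici,
        Subtype.forall, Prod.forall]
      constructor
      · rintro ⟨hs1, hs2⟩ i j h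
        exact ⟨hs1, hs2 i j h⟩
      · intro hs
        exact ⟨(hs ⟨0, by omega⟩ ⟨1, by omega⟩ rfl).1, fun i j h => (hs i j h).2⟩
    have hAcl : IsClosed A := by
      rw [hAeq]
      refine isClosed_iInter fun p => ?_
      refine ContinuousOn.preimage_isClosed_of_isClosed ?_ isClosed_Icc isClosed_Ici
      exact ((hcont p.1.2).sub (hcont p.1.1)).mono (fun s hs => hs.1)
    have h0A : (0:ℝ) ∈ A := ⟨⟨le_rfl, ht1⟩, fun i j h => min_le_left _ _⟩
    have hbdd : BddAbove A := ⟨t1, fun s hs => hs.1.2⟩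
    set u := sSup A with hu
    have huA : u ∈ A := hAcl.csSup_mem ⟨0, h0A⟩ hbdd
    have hu0 : 0 ≤ u := huA.1.1
    have hu1 : u = t1 := by
      by_contra hneq
      have hult : u < t1 := lt_of_le_of_ne huA.1.2 hneq
      -- positivity of all gaps near u
      have hev : ∀ᶠ s in 𝓝[Ici (0:ℝ)] u,
          ∀ p : {q : Fin N × Fin N // (q.1 : ℕ) + 1 = (q.2 : ℕ)},
            0 < x s p.1.2 - x s p.1.1 := by
        rw [eventually_all]
        intro p
        have hcwa : ContinuousWithinAt (fun s => x s p.1.2 - x s p.1.1) (Ici 0) u :=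
          (((hcont p.1.2).sub (hcont p.1.1)) u (mem_Ici.mpr hu0))
        exact hcwa.eventually (eventually_gt_nhds ((hmmpos _ _ p.2).trans_le (huA.2 _ _ p.2)))
      obtain ⟨ε, hε, hball⟩ := Metric.mem_nhdsWithin_iff.1 hev
      set δ := min (ε / 2) (t1 - u) with hδdef
      have hδ : 0 < δ := lt_min (by linarith) (by linarith)
      have hsub : Icc u (u + δ) ⊆ Metric.ball u ε ∩ Ici 0 := by
        intro s hs
        refine ⟨?_, le_trans hu0 hs.1⟩
        rw [Metric.mem_ball, Real.dist_eq, abs_of_nonneg (by linarith [hs.1])]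
        have : δ ≤ ε / 2 := min_le_left _ _
        linarith [hs.2]
      have hgaps : ∀ s ∈ Icc u (u + δ), Monotone (x s) := by
        intro s hs
        refine adjMonoCS _ fun i j h => ?_
        have := hball (hsub hs) ⟨(i, j), h⟩
        simp only [mem_setOf_eq] at this
        linarith
      -- barrier for each adjacent pair on [u, u+δ]
      have hbar : ∀ i j : Fin N, (i:ℕ) + 1 = (j:ℕ) →
          ∀ s ∈ Icc u (u + δ), mm i j ≤ x s j - x s i := by
        intro i j hij
        have hνd : 0 < ν j - ν i := sub_pos.2 (hν (hfinlt i j hij))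
        refine barrierCS (f' := fun t =>
          (ν j + (κ / (N:ℝ)) * ∑ k, psiCS β (x t k - x t j)) -
          (ν i + (κ / (N:ℝ)) * ∑ k, psiCS β (x t k - x t i))) ?_ ?_ ?_ (huA.2 i j hij)
        · exact ((hcont j).sub (hcont i)).mono fun s hs => le_trans hu0 hs.1
        · intro t ht
          have ht0 : 0 ≤ t := le_trans hu0 ht.1.le
          exact ((hder j t ht0).sub (hder i t ht0)).hasDerivAt
            (Ici_mem_nhds (lt_of_le_of_lt hu0 ht.1))
        · intro t ht hdm
          have hts : t ∈ Icc u (u + δ) := ⟨ht.1.le, ht.2.le⟩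
          have hmono := hgaps t hts
          set d := x t j - x t i with hdd
          have hd0 : 0 ≤ d := sub_nonneg.2 (hmono (le_of_lt (hfinlt i j hij)))
          have hterm : ∀ k : Fin N,
              psiCS β (x t k - x t i) - psiCS β d ≤ psiCS β (x t k - x t j) := by
            intro k
            rcases le_or_gt (k:ℕ) (i:ℕ) with hk | hk
            · have hki : x t k ≤ x t i := hmono (Fin.le_def.mpr hk)
              have ha0 : 0 ≤ x t i - x t k := by linarith
              have e1 : x t k - x t j = -((x t i - x t k) + d) := by rw [hdd]; ring
              have e2 : x t k - x t i = -(x t i - x t k) := by ring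
              rw [e1, e2, psiCS_neg, psiCS_neg]
              have := psiCS_subadd hβ0 hβ1 ha0 hd0
              linarith
            · have hjk : x t j ≤ x t k := hmono (Fin.le_def.mpr (by omega))
              have hb0 : 0 ≤ x t k - x t j := by linarith
              have e1 : x t k - x t i = (x t k - x t j) + d := by rw [hdd]; ring
              rw [e1]
              have := psiCS_subadd hβ0 hβ1 hb0 hd0
              linarith
          have hsum : -((N:ℝ) * psiCS β d) ≤
              (∑ k, psiCS β (x t k - x t j)) - (∑ k, psiCS β (x t k - x t i)) := by
            rw [← Finset.sum_sub_distrib]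
            calc -((N:ℝ) * psiCS β d) = ∑ _k : Fin N, (-psiCS β d) := by
                  rw [Finset.sum_const, Finset.card_univ, Fintype.card_fin, nsmul_eq_mul]
                  ring
              _ ≤ _ := Finset.sum_le_sum fun k _ => by linarith [hterm k]
          have hψ : psiCS β d ≤ (ν j - ν i) / κ := by
            have hz : 0 ≤ (ν j - ν i) / κ := le_of_lt (div_pos hνd hκ)
            have h2 : d ≤ ((1 - β) * ((ν j - ν i) / κ)) ^ (1 / (1 - β)) := by
              refine hdm.trans ((min_le_right _ _).trans_eq ?_)
              rw [mul_div_assoc]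
            calc psiCS β d ≤ psiCS β (((1 - β) * ((ν j - ν i) / κ)) ^ (1 / (1 - β))) :=
                  psiCS_mono hβ1 hd0 h2
              _ = (ν j - ν i) / κ := psiCS_inv hβ1 hz
          rw [le_div_iff₀ hκ] at hψ
          have h1 : (κ / (N:ℝ)) * (-((N:ℝ) * psiCS β d)) ≤ (κ / (N:ℝ)) *
              ((∑ k, psiCS β (x t k - x t j)) - (∑ k, psiCS β (x t k - x t i))) :=
            mul_le_mul_of_nonneg_left hsum (by positivity)
          have h2 : (κ / (N:ℝ)) * (-((N:ℝ) * psiCS β d)) = -(κ * psiCS β d) := by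
            field_simp
          rw [h2] at h1
          have h3 : (κ / (N:ℝ)) * ((∑ k, psiCS β (x t k - x t j))
              - (∑ k, psiCS β (x t k - x t i)))
              = (κ / (N:ℝ)) * (∑ k, psiCS β (x t k - x t j))
              - (κ / (N:ℝ)) * (∑ k, psiCS β (x t k - x t i)) := by ring
          rw [h3] at h1
          nlinarith [h1]
      -- contradiction: u + δ ∈ A
      have hmem : u + δ ∈ A := by
        refine ⟨⟨by linarith, by have : δ ≤ t1 - u := min_le_right _ _; linarith⟩, ?_⟩
        intro i j h
        exact hbar i j h (u + δ) ⟨by linarith, le_rfl⟩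
      have := le_csSup hbdd hmem
      rw [← hu] at this
      linarith
    intro i j h
    have := huA.2 i j h
    rwa [hu1] at this
  refine ⟨hCpos, ?_⟩
  intro t ht i j hij
  have hadj : ∀ k l : Fin N, (k:ℕ) < (l:ℕ) → Cm1 N β κ ν (x 0) ≤ x t l - x t k := by
    refine adjGeCS _ _ hCpos.le fun k l h => ?_
    exact (hCle k l h).trans (key t ht k l h)
  rcases lt_or_gt_of_ne (fun h : (i:ℕ) = (j:ℕ) => hij (Fin.ext h)) with h | h
  · have := hadj i j h
    rw [abs_sub_comm, abs_of_nonneg (by linarith)]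
    exact this
  · have := hadj j i h
    rw [abs_of_nonneg (by linarith)]
    exact this
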